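/- Let c ∈ (0,√2), p ∈ (0,1), ξ = p·c⁴/4, κ₁ = √((c² − √(c⁴ − 4ξ))/2), κ₂ = √((c² + √(c⁴ − 4ξ))/2). Then κ₂/κ₁ = √((1 + √(1−p))/(1 − √(1−p))), and for every natural number k ≥ 1, κ₂/κ₁ < k holds if and only if p > p_k := 1 − ((k² − 1)/(k² + 1))². -/

import Mathlib

open Real Filter Set

/-- `ξ = p c⁴ / 4`. -/
noncomputable def xiPar (c p : ℝ) : ℝ := p * c ^ 4 / 4

/-- `κ₁ = √((c² − √(c⁴ − 4ξ))/2)`. -/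
noncomputable def kappa1 (c p : ℝ) : ℝ :=
  Real.sqrt ((c ^ 2 - Real.sqrt (c ^ 4 - 4 * xiPar c p)) / 2)

/-- `κ₂ = √((c² + √(c⁴ − 4ξ))/2)`. -/
noncomputable def kappa2 (c p : ℝ) : ℝ :=
  Real.sqrt ((c ^ 2 + Real.sqrt (c ^ 4 - 4 * xiPar c p)) / 2)

/-- The function `L(c,p,θ)` from the paper. -/
noncomputable def Lfun (c p θ : ℝ) : ℝ :=
  (1 / 2) * (1 + kappa2 c p / kappa1 c p)
  + (1 / Real.pi) * Real.arctan
      ((kappa2 c p * (-(kappa1 c p) ^ 2 + xiPar c p + xiPar c p * θ * Real.sqrt (2 - c ^ 2))) /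
       (xiPar c p * (θ * (kappa1 c p) ^ 2 + Real.sqrt (2 - c ^ 2) + θ * (1 - c ^ 2))))
  - (kappa2 c p / (kappa1 c p * Real.pi)) * Real.arctan
      ((kappa1 c p * (-(kappa2 c p) ^ 2 + xiPar c p + xiPar c p * θ * Real.sqrt (2 - c ^ 2))) /
       (xiPar c p * (θ * (kappa2 c p) ^ 2 + Real.sqrt (2 - c ^ 2) + θ * (1 - c ^ 2))))

/-- The discontinuity point `θ₁ = −2√(2−c²)/(2−c² − c²√(1−p))`. -/
noncomputable def theta1 (c p : ℝ) : ℝ :=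
  -2 * Real.sqrt (2 - c ^ 2) / (2 - c ^ 2 - c ^ 2 * Real.sqrt (1 - p))

/-- The discontinuity point `θ₂ = −2√(2−c²)/(2−c² + c²√(1−p))`. -/
noncomputable def theta2 (c p : ℝ) : ℝ :=
  -2 * Real.sqrt (2 - c ^ 2) / (2 - c ^ 2 + c ^ 2 * Real.sqrt (1 - p))

/-- The threshold `p₀ = 4(c²−1)/c⁴`. -/
noncomputable def p0 (c : ℝ) : ℝ := 4 * (c ^ 2 - 1) / c ^ 4

/-- For `c ∈ (0,√2)`, `p ∈ (0,1)`:
`κ₂/κ₁ = √((1 + √(1−p))/(1 − √(1−p)))`, and for every `k ∈ ℕ`, `k ≥ 1`,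
`κ₂/κ₁ < k ↔ p > p_k := 1 − ((k² − 1)/(k² + 1))²`. -/
theorem stmt14 (c p : ℝ) (hc : c ∈ Set.Ioo 0 (Real.sqrt 2)) (hp : p ∈ Set.Ioo 0 1) :
    kappa2 c p / kappa1 c p =
      Real.sqrt ((1 + Real.sqrt (1 - p)) / (1 - Real.sqrt (1 - p))) ∧
    ∀ k : ℕ, 1 ≤ k →
      (kappa2 c p / kappa1 c p < (k : ℝ) ↔
        p > 1 - (((k : ℝ) ^ 2 - 1) / ((k : ℝ) ^ 2 + 1)) ^ 2) := by
  obtain ⟨hc0, _⟩ := hc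
  obtain ⟨hp0, hp1⟩ := hp
  set s := Real.sqrt (1 - p) with hs
  have hs0 : 0 < s := Real.sqrt_pos.mpr (by linarith)
  have hs1 : s < 1 := (Real.sqrt_lt' one_pos).mpr (by nlinarith)
  have hsq : s ^ 2 = 1 - p := Real.sq_sqrt (by linarith)
  have hcpos : 0 < c ^ 2 := by positivity
  have hroot : Real.sqrt (c ^ 4 - 4 * xiPar c p) = c ^ 2 * s := by
    have h : c ^ 4 - 4 * xiPar c p = (c ^ 2) ^ 2 * (1 - p) := by unfold xiPar; ring
    rw [h, Real.sqrt_mul (by positivity), Real.sqrt_sq hcpos.le]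
  have hk1 : kappa1 c p = Real.sqrt (c ^ 2 * (1 - s) / 2) := by
    unfold kappa1; rw [hroot]; congr 1; ring
  have hk2 : kappa2 c p = Real.sqrt (c ^ 2 * (1 + s) / 2) := by
    unfold kappa2; rw [hroot]; congr 1; ring
  have hratio : kappa2 c p / kappa1 c p = Real.sqrt ((1 + s) / (1 - s)) := by
    rw [hk1, hk2, ← Real.sqrt_div (by positivity)]
    congr 1
    have h1s : (1 : ℝ) - s ≠ 0 := by linarith
    field_simp
  refine ⟨hratio, ?_⟩
  intro k hk
  have hpos : (0 : ℝ) < 1 - s := by linarith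
  have hk0 : (1 : ℝ) ≤ (k : ℝ) := by exact_mod_cast hk
  rw [hratio]
  by_cases hk1' : k = 1
  · subst hk1'
    simp only [Nat.cast_one, one_pow]
    constructor
    · intro h
      exfalso
      have := (Real.sqrt_lt' one_pos).mp (by simpa using h)
      rw [div_lt_iff₀ hpos] at this
      linarith
    · intro h
      exfalso
      norm_num at h
      linarith
  · have hk2' : (2 : ℝ) ≤ (k : ℝ) := by
      have : 2 ≤ k := by omega
      exact_mod_cast this
    set r := ((k : ℝ) ^ 2 - 1) / ((k : ℝ) ^ 2 + 1) with hr
    have hden : (0 : ℝ) < (k : ℝ) ^ 2 + 1 := by positivity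
    have hr0 : 0 < r := by
      apply div_pos _ hden
      nlinarith
    rw [Real.sqrt_lt' (by linarith : (0 : ℝ) < (k : ℝ))]
    have hsr : s < r ↔ 1 - p < r ^ 2 := Real.sqrt_lt' hr0
    constructor
    · intro h
      rw [div_lt_iff₀ hpos] at h
      have h1 : s < r := by
        rw [hr, lt_div_iff₀ hden]
        nlinarith
      have := hsr.mp h1
      linarith
    · intro h
      have h1 : 1 - p < r ^ 2 := by linarith
      have h2 : s < r := hsr.mpr h1
      rw [hr, lt_div_iff₀ hden] at h2
      rw [div_lt_iff₀ hpos]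
      nlinarith
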